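/- Let X = (X_1,...,X_n) be a joint mix (∑_i X_i constant a.s.) with finite second moments, and write S_A = ∑_{i∈A} X_i for A ⊆ [n]. Suppose (a) X_A and X_{[n]∖A} are conditionally independent given S_A for every A ⊆ [n], and (b) E[f(X_A) | S_A] is an increasing function of S_A for every coordinate-wise increasing f and every A ⊆ [n]. Then X is negatively associated: Cov(f(X_A), g(X_B)) ≤ 0 for all disjoint A, B ⊆ [n] and all coordinate-wise increasing f, g with square-integrable images. -/

import Mathlib

open MeasureTheory ProbabilityTheory
open Filter

/-- Covariance of two real random variables. -/
noncomputable def cov {Ω : Type*} [MeasurableSpace Ω] (P : Measure Ω) (X Y : Ω → ℝ) : ℝ :=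
  ∫ ω, (X ω - ∫ x, X x ∂P) * (Y ω - ∫ x, Y x ∂P) ∂P

/-- The σ-algebra generated by the partial sum `S_A = ∑_{i∈A} X_i`. -/
def condSigma {Ω : Type*} [MeasurableSpace Ω] {n : ℕ} (X : Fin n → Ω → ℝ)
    (A : Finset (Fin n)) : MeasurableSpace Ω :=
  MeasurableSpace.comap (fun ω => ∑ i ∈ A, X i ω) inferInstance

noncomputable def myTrunc (M t : ℝ) : ℝ := max (min t M) (-M)

lemma myTrunc_mono (M : ℝ) : Monotone (myTrunc M) :=
  ((monotone_id.min monotone_const).max monotone_const)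

lemma myTrunc_measurable (M : ℝ) : Measurable (myTrunc M) := (myTrunc_mono M).measurable

lemma abs_myTrunc_le (M t : ℝ) (hM : 0 ≤ M) : |myTrunc M t| ≤ M := by
  rw [abs_le]; constructor
  · exact le_max_right _ _
  · exact max_le (min_le_right _ _) (by linarith)

lemma abs_myTrunc_le_abs (M t : ℝ) (hM : 0 ≤ M) : |myTrunc M t| ≤ |t| := by
  rcases le_total t 0 with h | h
  · have h1 : myTrunc M t ≤ 0 := max_le (le_trans (min_le_left _ _) h) (by linarith)
    have h2 : t ≤ myTrunc M t := le_max_of_le_left (le_min le_rfl (by linarith))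
    rw [abs_of_nonpos h1, abs_of_nonpos h]; linarith
  · have h1 : 0 ≤ myTrunc M t := le_max_of_le_left (le_min h hM)
    have h2 : myTrunc M t ≤ t := max_le (min_le_left _ _) (by linarith)
    rw [abs_of_nonneg h1, abs_of_nonneg h]; linarith

lemma myTrunc_eq_self {M t : ℝ} (h : |t| ≤ M) : myTrunc M t = t := by
  rw [abs_le] at h
  rw [myTrunc, min_eq_left h.2, max_eq_left h.1]

lemma myTrunc_tendsto (t : ℝ) :
    Tendsto (fun m : ℕ => myTrunc (m : ℝ) t) atTop (nhds t) := by
  refine tendsto_const_nhds.congr' ?_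
  filter_upwards [eventually_ge_atTop ⌈|t|⌉₊] with m hm
  exact (myTrunc_eq_self (le_trans (Nat.le_ceil _) (by exact_mod_cast hm))).symm

lemma my_cov_eq {Ω : Type*} [MeasurableSpace Ω] (P : Measure Ω) [IsProbabilityMeasure P]
    (u v : Ω → ℝ) (hu : Integrable u P) (hv : Integrable v P)
    (huv : Integrable (fun ω => u ω * v ω) P) :
    (∫ ω, (u ω - ∫ x, u x ∂P) * (v ω - ∫ x, v x ∂P) ∂P)
      = ∫ ω, u ω * v ω ∂P - (∫ ω, u ω ∂P) * ∫ ω, v ω ∂P := by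
  set a := ∫ x, u x ∂P with ha
  set b := ∫ x, v x ∂P with hb
  have i1 : Integrable (fun ω => u ω * v ω - a * v ω) P := huv.sub (hv.const_mul a)
  have i2 : Integrable (fun ω => u ω * v ω - a * v ω - b * u ω) P := i1.sub (hu.const_mul b)
  have e0 : (∫ ω, (u ω - a) * (v ω - b) ∂P)
      = ∫ ω, (u ω * v ω - a * v ω - b * u ω + a * b) ∂P := by
    congr 1; funext ω; ring
  have e1 : (∫ ω, (u ω * v ω - a * v ω - b * u ω + a * b) ∂P)
      = (∫ ω, (u ω * v ω - a * v ω - b * u ω) ∂P) + ∫ _ω : Ω, a * b ∂P :=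
    integral_add i2 (integrable_const _)
  have e2 : (∫ ω, (u ω * v ω - a * v ω - b * u ω) ∂P)
      = (∫ ω, (u ω * v ω - a * v ω) ∂P) - ∫ ω, b * u ω ∂P := integral_sub i1 (hu.const_mul b)
  have e3 : (∫ ω, (u ω * v ω - a * v ω) ∂P)
      = (∫ ω, u ω * v ω ∂P) - ∫ ω, a * v ω ∂P := integral_sub huv (hv.const_mul a)
  have e4 : (∫ ω, a * v ω ∂P) = a * b := by rw [integral_const_mul, ← hb]
  have e5 : (∫ ω, b * u ω ∂P) = b * a := by rw [integral_const_mul, ← ha]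
  have e6 : (∫ _ω : Ω, a * b ∂P) = a * b := by simp
  rw [e0, e1, e2, e3, e4, e5, e6]; ring

lemma my_chebyshev {Ω : Type*} [MeasurableSpace Ω] (P : Measure Ω) [IsProbabilityMeasure P]
    (u v : Ω → ℝ) (hu : Measurable u) (hv : Measurable v) {M : ℝ}
    (hub : ∀ᵐ ω ∂P, |u ω| ≤ M) (hvb : ∀ᵐ ω ∂P, |v ω| ≤ M)
    (hneg : ∀ ω ω', (u ω - u ω') * (v ω - v ω') ≤ 0) :
    ∫ ω, u ω * v ω ∂P ≤ (∫ ω, u ω ∂P) * ∫ ω, v ω ∂P := by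
  obtain ⟨ω0, h0⟩ := hub.exists
  have hM : 0 ≤ M := le_trans (abs_nonneg _) h0
  have hui : Integrable u P :=
    (integrable_const M).mono' hu.aestronglyMeasurable (by filter_upwards [hub] with ω h; simpa using h)
  have hvi : Integrable v P :=
    (integrable_const M).mono' hv.aestronglyMeasurable (by filter_upwards [hvb] with ω h; simpa using h)
  have huvi : Integrable (fun ω => u ω * v ω) P := by
    refine (integrable_const (M * M)).mono' (hu.mul hv).aestronglyMeasurable ?_
    filter_upwards [hub, hvb] with ω h1 h2
    simpa [abs_mul] using mul_le_mul h1 h2 (abs_nonneg _) hM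
  have key : ∫ z : Ω × Ω, (u z.1 - u z.2) * (v z.1 - v z.2) ∂(P.prod P) ≤ 0 :=
    integral_nonpos fun z => hneg _ _
  have i1 : Integrable (fun z : Ω × Ω => (u z.1 * v z.1) * 1) (P.prod P) :=
    huvi.mul_prod (integrable_const 1)
  have i2 : Integrable (fun z : Ω × Ω => 1 * (u z.2 * v z.2)) (P.prod P) :=
    (integrable_const 1).mul_prod huvi
  have i3 : Integrable (fun z : Ω × Ω => u z.1 * v z.2) (P.prod P) := hui.mul_prod hvi
  have i4 : Integrable (fun z : Ω × Ω => v z.1 * u z.2) (P.prod P) := hvi.mul_prod hui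
  have e0 : (∫ z : Ω × Ω, (u z.1 - u z.2) * (v z.1 - v z.2) ∂(P.prod P))
      = ∫ z : Ω × Ω, ((u z.1 * v z.1) * 1 + 1 * (u z.2 * v z.2) - u z.1 * v z.2
          - v z.1 * u z.2) ∂(P.prod P) := by
    congr 1; funext z; ring
  have e1 : (∫ z : Ω × Ω, ((u z.1 * v z.1) * 1 + 1 * (u z.2 * v z.2) - u z.1 * v z.2
          - v z.1 * u z.2) ∂(P.prod P))
      = (∫ z : Ω × Ω, ((u z.1 * v z.1) * 1 + 1 * (u z.2 * v z.2) - u z.1 * v z.2) ∂(P.prod P))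
        - ∫ z : Ω × Ω, v z.1 * u z.2 ∂(P.prod P) := integral_sub ((i1.add i2).sub i3) i4
  have e2 : (∫ z : Ω × Ω, ((u z.1 * v z.1) * 1 + 1 * (u z.2 * v z.2) - u z.1 * v z.2) ∂(P.prod P))
      = (∫ z : Ω × Ω, ((u z.1 * v z.1) * 1 + 1 * (u z.2 * v z.2)) ∂(P.prod P))
        - ∫ z : Ω × Ω, u z.1 * v z.2 ∂(P.prod P) := integral_sub (i1.add i2) i3
  have e3 : (∫ z : Ω × Ω, ((u z.1 * v z.1) * 1 + 1 * (u z.2 * v z.2)) ∂(P.prod P))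
      = (∫ z : Ω × Ω, (u z.1 * v z.1) * 1 ∂(P.prod P))
        + ∫ z : Ω × Ω, 1 * (u z.2 * v z.2) ∂(P.prod P) := integral_add i1 i2
  have p1 : (∫ z : Ω × Ω, (u z.1 * v z.1) * 1 ∂(P.prod P))
      = (∫ ω, u ω * v ω ∂P) * ∫ _ω : Ω, (1:ℝ) ∂P :=
    integral_prod_mul (fun a => u a * v a) (fun _ => (1:ℝ))
  have p2 : (∫ z : Ω × Ω, 1 * (u z.2 * v z.2) ∂(P.prod P))
      = (∫ _ω : Ω, (1:ℝ) ∂P) * ∫ ω, u ω * v ω ∂P :=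
    integral_prod_mul (fun _ => (1:ℝ)) (fun a => u a * v a)
  have p3 : (∫ z : Ω × Ω, u z.1 * v z.2 ∂(P.prod P))
      = (∫ ω, u ω ∂P) * ∫ ω, v ω ∂P := integral_prod_mul u v
  have p4 : (∫ z : Ω × Ω, v z.1 * u z.2 ∂(P.prod P))
      = (∫ ω, v ω ∂P) * ∫ ω, u ω ∂P := integral_prod_mul v u
  have pone : (∫ _ω : Ω, (1:ℝ) ∂P) = 1 := by simp
  rw [e0, e1, e2, e3, p1, p2, p3, p4, pone] at key
  nlinarith [key]

lemma my_abs_condexp_le {Ω : Type*} [m0 : MeasurableSpace Ω] (P : Measure Ω)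
    [IsProbabilityMeasure P] {m : MeasurableSpace Ω} (hm : m ≤ m0) {W : Ω → ℝ}
    (hW : Integrable W P) {M : ℝ} (hWb : ∀ ω, |W ω| ≤ M) :
    ∀ᵐ ω ∂P, |MeasureTheory.condExp m P W ω| ≤ M := by
  haveI : SigmaFinite (P.trim hm) := inferInstance
  have hub := condExp_mono (m := m) (μ := P) hW (integrable_const M)
    (Filter.Eventually.of_forall fun ω => (abs_le.mp (hWb ω)).2)
  have hlb := condExp_mono (m := m) (μ := P) (integrable_const (-M)) hW
    (Filter.Eventually.of_forall fun ω => (abs_le.mp (hWb ω)).1)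
  rw [condExp_const hm] at hub hlb
  filter_upwards [hub, hlb] with ω h1 h2
  rw [abs_le]; exact ⟨h2, h1⟩

-- the key per-truncation-level claim, as a standalone lemma
theorem stmt3_key {Ω : Type*} [MeasurableSpace Ω] (P : Measure Ω) [IsProbabilityMeasure P]
    {n : ℕ} (X : Fin n → Ω → ℝ) (hmeas : ∀ i, Measurable (X i))
    (c : ℝ) (hJM : ∀ᵐ ω ∂P, ∑ i, X i ω = c)
    (hCI : ∀ A : Finset (Fin n),
      ∀ f : ({i // i ∈ A} → ℝ) → ℝ, ∀ g : ({i // i ∉ A} → ℝ) → ℝ,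
        Measurable f → Measurable g →
        (∃ C, ∀ x, |f x| ≤ C) → (∃ C, ∀ x, |g x| ≤ C) →
        MeasureTheory.condExp (condSigma X A) P (fun ω => f (fun i => X i.1 ω) * g (fun i => X i.1 ω))
          =ᵐ[P] fun ω =>
            (MeasureTheory.condExp (condSigma X A) P (fun ω' => f (fun i => X i.1 ω')) ω) *
            (MeasureTheory.condExp (condSigma X A) P (fun ω' => g (fun i => X i.1 ω')) ω))
    (hMon : ∀ A : Finset (Fin n), ∀ f : ({i // i ∈ A} → ℝ) → ℝ,
      Measurable f → Monotone f →
      Integrable (fun ω => f (fun i => X i.1 ω)) P →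
      ∃ h : ℝ → ℝ, Monotone h ∧
        MeasureTheory.condExp (condSigma X A) P (fun ω => f (fun i => X i.1 ω))
          =ᵐ[P] fun ω => h (∑ i ∈ A, X i ω))
    (A B : Finset (Fin n)) (hAB : Disjoint A B)
    (f : ({i // i ∈ A} → ℝ) → ℝ) (g : ({i // i ∈ B} → ℝ) → ℝ)
    (hf : Measurable f) (hg : Measurable g) (hfmono : Monotone f) (hgmono : Monotone g)
    {M : ℝ} (hM : 0 ≤ M) (hfb : ∀ x, |f x| ≤ M) (hgb : ∀ x, |g x| ≤ M) :
    (∫ ω, f (fun i => X i.1 ω) * g (fun i => X i.1 ω) ∂P)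
      ≤ (∫ ω, f (fun i => X i.1 ω) ∂P) * ∫ ω, g (fun i => X i.1 ω) ∂P := by
  classical
  set SA : Ω → ℝ := fun ω => ∑ i ∈ A, X i ω with hSAdef
  set SA' : Ω → ℝ := fun ω => ∑ i ∈ Aᶜ, X i ω with hSA'def
  have hSA : Measurable SA := Finset.measurable_sum A fun i _ => hmeas i
  have hSA' : Measurable SA' := Finset.measurable_sum Aᶜ fun i _ => hmeas i
  have hmA : condSigma X A ≤ ‹MeasurableSpace Ω› := Measurable.comap_le hSA
  have hmA' : condSigma X Aᶜ ≤ ‹MeasurableSpace Ω› := Measurable.comap_le hSA'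
  haveI : SigmaFinite (P.trim hmA) := inferInstance
  haveI : SigmaFinite (P.trim hmA') := inferInstance
  have hBA : ∀ i : Fin n, i ∈ B → i ∉ A := fun i hi => Finset.disjoint_right.mp hAB hi
  set F : Ω → ℝ := fun ω => f (fun i => X i.1 ω) with hFdef
  set G : Ω → ℝ := fun ω => g (fun i => X i.1 ω) with hGdef
  have hπ : ∀ s : Finset (Fin n), Measurable fun ω => (fun i : {i // i ∈ s} => X i.1 ω) :=
    fun s => measurable_pi_lambda _ fun i => hmeas i.1
  have hFmeas : Measurable F := hf.comp (hπ A)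
  have hGmeas : Measurable G := hg.comp (hπ B)
  have hFint : Integrable F P := (integrable_const M).mono' hFmeas.aestronglyMeasurable
    (Filter.Eventually.of_forall fun ω => by simpa using hfb _)
  have hGint : Integrable G P := (integrable_const M).mono' hGmeas.aestronglyMeasurable
    (Filter.Eventually.of_forall fun ω => by simpa using hgb _)
  -- the function of X_{Aᶜ} representing G
  set gt : ({i // i ∉ A} → ℝ) → ℝ :=
    fun x => g (fun j : {i // i ∈ B} => x ⟨j.1, hBA j.1 j.2⟩) with hgtdef
  have hgtmeas : Measurable gt :=
    hg.comp (measurable_pi_lambda _ fun j => measurable_pi_apply _)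
  have hgtmono : Monotone gt := fun x y hxy => hgmono fun j => hxy _
  have hgtbdd : ∀ x, |gt x| ≤ M := fun x => hgb _
  have hGeq : G = fun ω => gt (fun i => X i.1 ω) := rfl
  set gt' : ({i // i ∈ Aᶜ} → ℝ) → ℝ :=
    fun x => gt (fun i => x ⟨i.1, Finset.mem_compl.mpr i.2⟩) with hgt'def
  have hres : Measurable (fun (x : {i // i ∈ Aᶜ} → ℝ) (i : {i // i ∉ A}) =>
      x ⟨i.1, Finset.mem_compl.mpr i.2⟩) :=
    measurable_pi_lambda _ fun j => measurable_pi_apply _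
  have hgt'meas : Measurable gt' := hgtmeas.comp hres
  have hgt'mono : Monotone gt' := fun x y hxy =>
    hgtmono fun j => hxy ⟨j.1, Finset.mem_compl.mpr j.2⟩
  -- conditional expectations as monotone functions of sums
  obtain ⟨h1, h1mono, h1eq0⟩ := hMon A f hf hfmono hFint
  have h1eq : MeasureTheory.condExp (condSigma X A) P F =ᵐ[P] fun ω => h1 (SA ω) := h1eq0
  obtain ⟨h2, h2mono, h2eq0⟩ := hMon Aᶜ gt' hgt'meas hgt'mono hGint
  have h2eq : MeasureTheory.condExp (condSigma X Aᶜ) P G =ᵐ[P] fun ω => h2 (SA' ω) := h2eq0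
  -- joint mix
  have hsum : ∀ᵐ ω ∂P, SA ω + SA' ω = c := by
    filter_upwards [hJM] with ω h
    rw [← h]; exact Finset.sum_add_sum_compl A fun i => X i ω
  set k : ℝ → ℝ := fun s => h2 (c - s) with hkdef
  have hkmeas : Measurable k := h2mono.measurable.comp (measurable_const.sub measurable_id)
  have hkanti : Antitone k := fun s t hst => h2mono (sub_le_sub_left hst c)
  have hkSA_eq : (fun ω => k (SA ω)) =ᵐ[P] fun ω => h2 (SA' ω) := by
    filter_upwards [hsum] with ω h
    have : c - SA ω = SA' ω := by linarith
    simp only [hkdef, this]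
  have hbound2 : ∀ᵐ ω ∂P, |h2 (SA' ω)| ≤ M := by
    filter_upwards [h2eq, my_abs_condexp_le P hmA' hGint (fun ω => hgb _)] with ω hωeq hωb
    rw [← hωeq]; exact hωb
  have hbound1 : ∀ᵐ ω ∂P, |h1 (SA ω)| ≤ M := by
    filter_upwards [h1eq, my_abs_condexp_le P hmA hFint (fun ω => hfb _)] with ω hωeq hωb
    rw [← hωeq]; exact hωb
  have hkSA_bdd : ∀ᵐ ω ∂P, |k (SA ω)| ≤ M := by
    filter_upwards [hkSA_eq, hbound2] with ω h1' h2'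
    rw [h1']; exact h2'
  have hkSAmeas : Measurable (fun ω => k (SA ω)) := hkmeas.comp hSA
  have hkSAint : Integrable (fun ω => k (SA ω)) P :=
    (integrable_const M).mono' hkSAmeas.aestronglyMeasurable
      (by filter_upwards [hkSA_bdd] with ω h; simpa using h)
  -- identify E[G | S_A] with k ∘ S_A
  have hCG : (fun ω => k (SA ω)) =ᵐ[P] MeasureTheory.condExp (condSigma X A) P G := by
    refine ae_eq_condExp_of_forall_setIntegral_eq hmA hGint
      (fun s _ _ => hkSAint.integrableOn) ?_ ?_
    · intro s hs _
      obtain ⟨E, hE, rfl⟩ := MeasurableSpace.measurableSet_comap.mp hs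
      set E' : Set ℝ := (fun x => c - x) ⁻¹' E with hE'def
      have hE' : MeasurableSet E' := (measurable_const.sub measurable_id) hE
      have hsets : SA ⁻¹' E =ᵐ[P] SA' ⁻¹' E' := by
        rw [Filter.eventuallyEq_set]
        filter_upwards [hsum] with ω h
        simp only [Set.mem_preimage, hE'def]
        rw [show SA ω = c - SA' ω from by linarith]
      have hsA' : MeasurableSet[condSigma X Aᶜ] (SA' ⁻¹' E') :=
        MeasurableSpace.measurableSet_comap.mpr ⟨E', hE', rfl⟩
      calc ∫ ω in SA ⁻¹' E, k (SA ω) ∂P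
          = ∫ ω in SA' ⁻¹' E', k (SA ω) ∂P := setIntegral_congr_set hsets
        _ = ∫ ω in SA' ⁻¹' E', h2 (SA' ω) ∂P :=
            integral_congr_ae (ae_restrict_of_ae hkSA_eq)
        _ = ∫ ω in SA' ⁻¹' E', MeasureTheory.condExp (condSigma X Aᶜ) P G ω ∂P :=
            (integral_congr_ae (ae_restrict_of_ae h2eq)).symm
        _ = ∫ ω in SA' ⁻¹' E', G ω ∂P := setIntegral_condExp hmA' hGint hsA'
        _ = ∫ ω in SA ⁻¹' E, G ω ∂P := setIntegral_congr_set hsets.symm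
    · have hSAm : Measurable[condSigma X A] SA := Measurable.of_comap_le le_rfl
      exact StronglyMeasurable.aestronglyMeasurable (Measurable.stronglyMeasurable (hkmeas.comp hSAm))
  -- conditional independence
  have hci : MeasureTheory.condExp (condSigma X A) P (fun ω => F ω * G ω) =ᵐ[P]
      fun ω => MeasureTheory.condExp (condSigma X A) P F ω *
        MeasureTheory.condExp (condSigma X A) P G ω :=
    hCI A f gt hf hgtmeas ⟨M, hfb⟩ ⟨M, hgtbdd⟩
  -- Chebyshev
  have humeas : Measurable (fun ω => h1 (SA ω)) := h1mono.measurable.comp hSA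
  have hneg : ∀ ω ω', (h1 (SA ω) - h1 (SA ω')) * (k (SA ω) - k (SA ω')) ≤ 0 := by
    intro ω ω'
    rcases le_total (SA ω) (SA ω') with h | h
    · exact mul_nonpos_iff.mpr (Or.inr ⟨sub_nonpos.mpr (h1mono h), sub_nonneg.mpr (hkanti h)⟩)
    · exact mul_nonpos_iff.mpr (Or.inl ⟨sub_nonneg.mpr (h1mono h), sub_nonpos.mpr (hkanti h)⟩)
  have cheb := my_chebyshev P (fun ω => h1 (SA ω)) (fun ω => k (SA ω)) humeas hkSAmeas
    hbound1 hkSA_bdd hneg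
  -- assemble
  have q1 : (∫ ω, F ω * G ω ∂P) = ∫ ω, h1 (SA ω) * k (SA ω) ∂P := by
    calc (∫ ω, F ω * G ω ∂P)
        = ∫ ω, MeasureTheory.condExp (condSigma X A) P (fun ω' => F ω' * G ω') ω ∂P :=
          (integral_condExp hmA).symm
      _ = ∫ ω, MeasureTheory.condExp (condSigma X A) P F ω *
            MeasureTheory.condExp (condSigma X A) P G ω ∂P := integral_congr_ae hci
      _ = ∫ ω, h1 (SA ω) * k (SA ω) ∂P := integral_congr_ae (h1eq.mul hCG.symm)
  have q2 : (∫ ω, F ω ∂P) = ∫ ω, h1 (SA ω) ∂P := by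
    calc (∫ ω, F ω ∂P) = ∫ ω, MeasureTheory.condExp (condSigma X A) P F ω ∂P :=
          (integral_condExp hmA).symm
      _ = ∫ ω, h1 (SA ω) ∂P := integral_congr_ae h1eq
  have q3 : (∫ ω, G ω ∂P) = ∫ ω, k (SA ω) ∂P := by
    calc (∫ ω, G ω ∂P) = ∫ ω, MeasureTheory.condExp (condSigma X A) P G ω ∂P :=
          (integral_condExp hmA).symm
      _ = ∫ ω, k (SA ω) ∂P := integral_congr_ae hCG.symm
  rw [show (∫ ω, f (fun i => X i.1 ω) * g (fun i => X i.1 ω) ∂P) = ∫ ω, F ω * G ω ∂P from rfl]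
  rw [q1, q2, q3]
  exact cheb

/-- If a joint mix `X` is such that (a) `X_A` and `X_{Aᶜ}` are conditionally independent
given `S_A` for every `A ⊆ [n]`, and (b) `E[f(X_A) | S_A]` is an increasing function of
`S_A` for every increasing `f` and every `A ⊆ [n]`, then `X` is negatively associated. -/
theorem stmt3 {Ω : Type*} [MeasurableSpace Ω] (P : Measure Ω) [IsProbabilityMeasure P]
    {n : ℕ} (X : Fin n → Ω → ℝ) (hmeas : ∀ i, Measurable (X i))
    (hL2 : ∀ i, MemLp (X i) 2 P)
    (c : ℝ) (hJM : ∀ᵐ ω ∂P, ∑ i, X i ω = c)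
    -- (a) conditional independence of `X_A` and `X_{[n]∖A}` given `S_A`
    (hCI : ∀ A : Finset (Fin n),
      ∀ f : ({i // i ∈ A} → ℝ) → ℝ, ∀ g : ({i // i ∉ A} → ℝ) → ℝ,
        Measurable f → Measurable g →
        (∃ C, ∀ x, |f x| ≤ C) → (∃ C, ∀ x, |g x| ≤ C) →
        MeasureTheory.condExp (condSigma X A) P (fun ω => f (fun i => X i.1 ω) * g (fun i => X i.1 ω))
          =ᵐ[P] fun ω =>
            (MeasureTheory.condExp (condSigma X A) P (fun ω' => f (fun i => X i.1 ω')) ω) *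
            (MeasureTheory.condExp (condSigma X A) P (fun ω' => g (fun i => X i.1 ω')) ω))
    -- (b) `E[f(X_A) | S_A]` increasing in `S_A`
    (hMon : ∀ A : Finset (Fin n), ∀ f : ({i // i ∈ A} → ℝ) → ℝ,
      Measurable f → Monotone f →
      Integrable (fun ω => f (fun i => X i.1 ω)) P →
      ∃ h : ℝ → ℝ, Monotone h ∧
        MeasureTheory.condExp (condSigma X A) P (fun ω => f (fun i => X i.1 ω))
          =ᵐ[P] fun ω => h (∑ i ∈ A, X i ω)) :
    -- conclusion: `X` is negatively associated
    ∀ A B : Finset (Fin n), Disjoint A B →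
      ∀ f : ({i // i ∈ A} → ℝ) → ℝ, ∀ g : ({i // i ∈ B} → ℝ) → ℝ,
        Measurable f → Measurable g → Monotone f → Monotone g →
        MemLp (fun ω => f (fun i => X i.1 ω)) 2 P →
        MemLp (fun ω => g (fun i => X i.1 ω)) 2 P →
        cov P (fun ω => f (fun i => X i.1 ω)) (fun ω => g (fun i => X i.1 ω)) ≤ 0 := by

  intro A B hAB f g hf hg hfmono hgmono hf2 hg2
  set F : Ω → ℝ := fun ω => f (fun i => X i.1 ω) with hFdef
  set G : Ω → ℝ := fun ω => g (fun i => X i.1 ω) with hGdef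
  have hπ : ∀ s : Finset (Fin n), Measurable fun ω => (fun i : {i // i ∈ s} => X i.1 ω) :=
    fun s => measurable_pi_lambda _ fun i => hmeas i.1
  have hFmeas : Measurable F := hf.comp (hπ A)
  have hGmeas : Measurable G := hg.comp (hπ B)
  have hFint : Integrable F P := hf2.integrable one_le_two
  have hGint : Integrable G P := hg2.integrable one_le_two
  have hFG : Integrable (fun ω => F ω * G ω) P := by
    refine (hf2.integrable_sq.add hg2.integrable_sq).mono'
      (hFmeas.mul hGmeas).aestronglyMeasurable (Filter.Eventually.of_forall fun ω => ?_)
    simp only [Real.norm_eq_abs, abs_mul, Pi.add_apply]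
    nlinarith [sq_nonneg (|F ω| - |G ω|), sq_abs (F ω), sq_abs (G ω),
      abs_nonneg (F ω), abs_nonneg (G ω)]
  have key : ∀ m : ℕ,
      (∫ ω, myTrunc (m : ℝ) (F ω) * myTrunc (m : ℝ) (G ω) ∂P)
        ≤ (∫ ω, myTrunc (m : ℝ) (F ω) ∂P) * ∫ ω, myTrunc (m : ℝ) (G ω) ∂P := fun m =>
    stmt3_key P X hmeas c hJM hCI hMon A B hAB
      (fun x => myTrunc (m : ℝ) (f x)) (fun x => myTrunc (m : ℝ) (g x))
      ((myTrunc_measurable _).comp hf) ((myTrunc_measurable _).comp hg)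
      ((myTrunc_mono _).comp hfmono) ((myTrunc_mono _).comp hgmono)
      (Nat.cast_nonneg m) (fun x => abs_myTrunc_le _ _ (Nat.cast_nonneg m))
      (fun x => abs_myTrunc_le _ _ (Nat.cast_nonneg m))
  have tFG : Tendsto (fun m : ℕ => ∫ ω, myTrunc (m : ℝ) (F ω) * myTrunc (m : ℝ) (G ω) ∂P)
      atTop (nhds (∫ ω, F ω * G ω ∂P)) := by
    refine tendsto_integral_of_dominated_convergence (fun ω => |F ω| * |G ω|)
      (fun m => (((myTrunc_measurable _).comp hFmeas).mul
        ((myTrunc_measurable _).comp hGmeas)).aestronglyMeasurable) ?_ ?_ ?_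
    · have : (fun ω => |F ω| * |G ω|) = fun ω => |F ω * G ω| :=
        funext fun ω => (abs_mul _ _).symm
      rw [this]; exact hFG.abs
    · intro m
      refine Filter.Eventually.of_forall fun ω => ?_
      rw [Real.norm_eq_abs, abs_mul]
      exact mul_le_mul (abs_myTrunc_le_abs _ _ (Nat.cast_nonneg m))
        (abs_myTrunc_le_abs _ _ (Nat.cast_nonneg m)) (abs_nonneg _) (abs_nonneg _)
    · exact Filter.Eventually.of_forall fun ω =>
        (myTrunc_tendsto (F ω)).mul (myTrunc_tendsto (G ω))
  have tF : Tendsto (fun m : ℕ => ∫ ω, myTrunc (m : ℝ) (F ω) ∂P) atTop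
      (nhds (∫ ω, F ω ∂P)) := by
    refine tendsto_integral_of_dominated_convergence (fun ω => |F ω|)
      (fun m => ((myTrunc_measurable _).comp hFmeas).aestronglyMeasurable) hFint.abs ?_ ?_
    · intro m
      exact Filter.Eventually.of_forall fun ω => by
        rw [Real.norm_eq_abs]; exact abs_myTrunc_le_abs _ _ (Nat.cast_nonneg m)
    · exact Filter.Eventually.of_forall fun ω => myTrunc_tendsto (F ω)
  have tG : Tendsto (fun m : ℕ => ∫ ω, myTrunc (m : ℝ) (G ω) ∂P) atTop
      (nhds (∫ ω, G ω ∂P)) := by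
    refine tendsto_integral_of_dominated_convergence (fun ω => |G ω|)
      (fun m => ((myTrunc_measurable _).comp hGmeas).aestronglyMeasurable) hGint.abs ?_ ?_
    · intro m
      exact Filter.Eventually.of_forall fun ω => by
        rw [Real.norm_eq_abs]; exact abs_myTrunc_le_abs _ _ (Nat.cast_nonneg m)
    · exact Filter.Eventually.of_forall fun ω => myTrunc_tendsto (G ω)
  have hcov : cov P F G = ∫ ω, F ω * G ω ∂P - (∫ ω, F ω ∂P) * ∫ ω, G ω ∂P :=
    my_cov_eq P F G hFint hGint hFG
  rw [hcov]
  exact le_of_tendsto (tFG.sub (tF.mul tG))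
    (Filter.Eventually.of_forall fun m => sub_nonpos.mpr (key m))
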